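/- Arslanov's completeness criterion: if A is a computably enumerable set with A <_T ∅' (A is Turing incomplete), then every A-computable total function f : ℕ → ℕ has a fixed point, i.e. there exists e with W_{f(e)} = W_e. -/

import Mathlib

/-- The `e`-th partial computable function in a standard numbering
satisfying the S-m-n theorem. -/
def phi (e : ℕ) : ℕ →. ℕ := (Denumerable.ofNat Nat.Partrec.Code e).eval

/-- The `e`-th computably enumerable set `W e = dom (phi e)`. -/
def W (e : ℕ) : Set ℕ := {n | (phi e n).Dom}

/-- Partial functions computable relative to an oracle `O`. -/
inductive OracleRecursiveIn (O : ℕ →. ℕ) : (ℕ →. ℕ) → Prop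
  | oracle : OracleRecursiveIn O O
  | zero : OracleRecursiveIn O (pure 0)
  | succ : OracleRecursiveIn O Nat.succ
  | left : OracleRecursiveIn O ↑fun n : ℕ => n.unpair.1
  | right : OracleRecursiveIn O ↑fun n : ℕ => n.unpair.2
  | pair {f g} : OracleRecursiveIn O f → OracleRecursiveIn O g →
      OracleRecursiveIn O fun n => Nat.pair <$> f n <*> g n
  | comp {f g} : OracleRecursiveIn O f → OracleRecursiveIn O g → OracleRecursiveIn O fun n => g n >>= f
  | prec {f g} : OracleRecursiveIn O f → OracleRecursiveIn O g → OracleRecursiveIn O (Nat.unpaired fun a n =>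
      n.rec (f a) fun y IH => do let i ← IH; g (Nat.pair a (Nat.pair y i)))
  | rfind {f} : OracleRecursiveIn O f →
      OracleRecursiveIn O fun a => Nat.rfind fun n => (fun m => m = 0) <$> f (Nat.pair a n)

open scoped Classical in
/-- The characteristic function of a set, as an oracle. -/
noncomputable def charFn (A : Set ℕ) : ℕ →. ℕ := fun n => Part.some (if n ∈ A then 1 else 0)

/-- Turing reducibility for sets: `A ≤_T B`. -/
def TuringRed (A B : Set ℕ) : Prop := OracleRecursiveIn (charFn B) (charFn A)

/-- `A` computes the total function `f`, i.e. `f ≤_T A`. -/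
def FunRecIn (A : Set ℕ) (f : ℕ → ℕ) : Prop := OracleRecursiveIn (charFn A) fun n => Part.some (f n)

/-- The halting set ∅′. -/
def Khalt : Set ℕ := {n | (phi n n).Dom}

namespace Arslanov

open Nat.Partrec (Code)
open Nat.Partrec.Code

theorem recIn_of_partrec {O : ℕ →. ℕ} {f : ℕ →. ℕ} (hf : Nat.Partrec f) : OracleRecursiveIn O f := by
  induction hf with
  | zero => exact .zero
  | succ => exact .succ
  | left => exact .left
  | right => exact .right
  | pair _ _ ih1 ih2 => exact .pair ih1 ih2
  | comp _ _ ih1 ih2 => exact .comp ih1 ih2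
  | prec _ _ ih1 ih2 => exact .prec ih1 ih2
  | rfind _ ih => exact .rfind ih

theorem recIn_congr {O : ℕ →. ℕ} {f g : ℕ →. ℕ} (h : OracleRecursiveIn O f) (e : ∀ n, f n = g n) :
    OracleRecursiveIn O g := (funext e : f = g) ▸ h

theorem recIn_of_computable {O : ℕ →. ℕ} {p : ℕ → ℕ} (hp : Computable p) :
    OracleRecursiveIn O (fun n => Part.some (p n)) := by
  have := Partrec.nat_iff.1 hp
  exact recIn_congr (recIn_of_partrec this) (fun n => rfl)

/-- postcomposition with a computable function -/
theorem recIn_postcomp {O f : ℕ →. ℕ} (hf : OracleRecursiveIn O f) {p : ℕ → ℕ} (hp : Computable p) :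
    OracleRecursiveIn O (fun n => (f n).map p) := by
  have := OracleRecursiveIn.comp (recIn_of_computable (O := O) hp) hf
  refine recIn_congr this fun n => ?_
  exact Part.bind_some_eq_map _ _

/-- precomposition with a computable function -/
theorem recIn_precomp {O f : ℕ →. ℕ} (hf : OracleRecursiveIn O f) {p : ℕ → ℕ} (hp : Computable p) :
    OracleRecursiveIn O (fun n => f (p n)) := by
  have := OracleRecursiveIn.comp hf (recIn_of_computable (O := O) hp)
  refine recIn_congr this fun n => ?_
  exact Part.bind_some (p n) f

theorem recIn_some_id {O : ℕ →. ℕ} : OracleRecursiveIn O (fun n => Part.some n) :=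
  recIn_of_computable Computable.id

/-- pairing with self: `fun n => pair n <$> f n` -/
theorem recIn_pair_self {O f : ℕ →. ℕ} (hf : OracleRecursiveIn O f) :
    OracleRecursiveIn O (fun n => (f n).map (Nat.pair n)) := by
  have := OracleRecursiveIn.pair (recIn_some_id (O := O)) hf
  refine recIn_congr this fun n => ?_
  simp [Seq.seq]


/-- stage-`s` approximation of the c.e. set with code `c₀` -/
def Astage (c₀ : Code) (s n : ℕ) : Bool := (evaln s c₀ n).isSome

theorem Astage_mono {c₀ : Code} {s t n : ℕ} (h : s ≤ t) (hs : Astage c₀ s n = true) :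
    Astage c₀ t n = true := by
  unfold Astage at *
  obtain ⟨v, hv⟩ := Option.isSome_iff_exists.1 hs
  exact Option.isSome_iff_exists.2 ⟨v, evaln_mono h hv⟩

theorem Astage_sound {c₀ : Code} {s n : ℕ} (hs : Astage c₀ s n = true) : (eval c₀ n).Dom := by
  obtain ⟨v, hv⟩ := Option.isSome_iff_exists.1 hs
  exact Part.dom_iff_mem.2 ⟨v, evaln_sound hv⟩

theorem astage_prim (c₀ : Code) : Primrec₂ (Astage c₀) :=
  Primrec.option_isSome.comp
    (primrec_evaln.comp ((Primrec.fst.pair (Primrec.const c₀)).pair Primrec.snd))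

/-- approximation of `prec` -/
def precApprox (Hf Hg : ℕ → ℕ → Option ℕ) (s p : ℕ) : Option ℕ :=
  Nat.rec (Hf s p.unpair.1)
    (fun y IH => IH.bind fun i => Hg s (Nat.pair p.unpair.1 (Nat.pair y i))) p.unpair.2

theorem precApprox_prim {Hf Hg : ℕ → ℕ → Option ℕ} (hf : Primrec₂ Hf) (hg : Primrec₂ Hg) :
    Primrec₂ (precApprox Hf Hg) := by
  have un1 : Primrec fun p : ℕ × ℕ => p.2.unpair.1 :=
    (Primrec.fst.comp Primrec.unpair).comp Primrec.snd
  have un2 : Primrec fun p : ℕ × ℕ => p.2.unpair.2 :=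
    (Primrec.snd.comp Primrec.unpair).comp Primrec.snd
  exact Primrec.nat_rec' un2 (hf.comp Primrec.fst un1)
    ((Primrec.option_bind (Primrec.snd.comp Primrec.snd)
      ((hg.comp (Primrec.fst.comp (Primrec.fst.comp Primrec.fst))
        (Primrec₂.natPair.comp (un1.comp (Primrec.fst.comp Primrec.fst))
          (Primrec₂.natPair.comp (Primrec.fst.comp (Primrec.snd.comp Primrec.fst))
            Primrec.snd))).to₂)).to₂)

/-- one step of the bounded `rfind` search. `none` = dead,
`some none` = still searching, `some (some y)` = found answer `y`. -/
def rstep (hv : Option ℕ) (b : ℕ) (st : Option (Option ℕ)) : Option (Option ℕ) :=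
  st.bind fun o =>
    if o.isSome then some o
    else hv.bind fun v => if v = 0 then some (some b) else some none

theorem rstep_prim {α : Type*} [Primcodable α] {h1 : α → Option ℕ} {h2 : α → ℕ}
    {h3 : α → Option (Option ℕ)} (p1 : Primrec h1) (p2 : Primrec h2) (p3 : Primrec h3) :
    Primrec fun x => rstep (h1 x) (h2 x) (h3 x) := by
  unfold rstep
  have inner2 : Primrec fun q : (α × Option ℕ) × ℕ =>
      (if q.2 = 0 then some (some (h2 q.1.1)) else some none : Option (Option ℕ)) := by
    refine Primrec.ite (Primrec.eq.comp Primrec.snd (Primrec.const 0)) ?_ (Primrec.const _)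
    exact Primrec.option_some.comp (Primrec.option_some.comp
      (p2.comp (Primrec.fst.comp Primrec.fst)))
  have inner : Primrec fun q : α × Option ℕ =>
      (if q.2.isSome then some q.2
       else (h1 q.1).bind fun v => if v = 0 then some (some (h2 q.1)) else some none) := by
    refine Primrec.ite
      (Primrec.eq.comp (Primrec.option_isSome.comp Primrec.snd) (Primrec.const true))
      (Primrec.option_some.comp Primrec.snd) ?_
    exact Primrec.option_bind (p1.comp Primrec.fst) inner2.to₂
  exact Primrec.option_bind p3 inner.to₂

def rsA (Hf : ℕ → ℕ → Option ℕ) (s a : ℕ) : ℕ → Option (Option ℕ)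
  | 0 => some none
  | (b+1) => rstep (Hf s (Nat.pair a b)) b (rsA Hf s a b)

/-- approximation of `rfind` -/
def rfindApprox (Hf : ℕ → ℕ → Option ℕ) (s a : ℕ) : Option ℕ := (rsA Hf s a (s+1)).bind id

theorem rsA_prim {Hf : ℕ → ℕ → Option ℕ} (hf : Primrec₂ Hf) :
    Primrec fun x : (ℕ × ℕ) × ℕ => rsA Hf x.1.1 x.1.2 x.2 := by
  refine (Primrec.nat_rec' (Primrec.snd)
    (Primrec.const (some (none : Option ℕ)))
    (rstep_prim (α := ((ℕ × ℕ) × ℕ) × ℕ × Option (Option ℕ))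
      (hf.comp (Primrec.fst.comp (Primrec.fst.comp Primrec.fst))
        (Primrec₂.natPair.comp (Primrec.snd.comp (Primrec.fst.comp Primrec.fst))
          (Primrec.fst.comp Primrec.snd)))
      (Primrec.fst.comp Primrec.snd) (Primrec.snd.comp Primrec.snd)).to₂).of_eq ?_
  intro x
  induction x.2 with
  | zero => simp [rsA]
  | succ b ih => simp [rsA, ← ih]

theorem rfindApprox_prim {Hf : ℕ → ℕ → Option ℕ} (hf : Primrec₂ Hf) :
    Primrec₂ (rfindApprox Hf) := by
  have h1 : Primrec fun p : ℕ × ℕ => rsA Hf p.1 p.2 (p.1 + 1) :=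
    (rsA_prim hf).comp (Primrec.id.pair (Primrec.succ.comp Primrec.fst))
  exact (Primrec.option_bind h1 Primrec.snd.to₂).to₂

theorem rsA_searching {Hf : ℕ → ℕ → Option ℕ} {s a b : ℕ}
    (h : ∀ n, n < b → ∃ v, Hf s (Nat.pair a n) = some (v + 1)) :
    rsA Hf s a b = some none := by
  induction b with
  | zero => rfl
  | succ b ih =>
    obtain ⟨v, hv⟩ := h b (Nat.lt_succ_self b)
    rw [rsA, ih fun n hn => h n (hn.trans (Nat.lt_succ_self b)), hv]; rfl

theorem rsA_found {Hf : ℕ → ℕ → Option ℕ} {s a y : ℕ} (h0 : Hf s (Nat.pair a y) = some 0)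
    (hlt : ∀ n, n < y → ∃ v, Hf s (Nat.pair a n) = some (v + 1)) :
    ∀ b, y < b → rsA Hf s a b = some (some y) := by
  intro b hb
  induction b with
  | zero => omega
  | succ b ih =>
    rcases Nat.lt_succ_iff_lt_or_eq.1 hb with hb' | rfl
    · rw [rsA, ih hb']; rfl
    · rw [rsA, rsA_searching hlt, h0]; rfl

theorem rfindApprox_eq {Hf : ℕ → ℕ → Option ℕ} {s a y : ℕ} (hy : y ≤ s)
    (h0 : Hf s (Nat.pair a y) = some 0)
    (hlt : ∀ n, n < y → ∃ v, Hf s (Nat.pair a n) = some (v + 1)) :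
    rfindApprox Hf s a = some y := by
  rw [rfindApprox, rsA_found h0 hlt (s+1) (by omega)]; rfl


end Arslanov
namespace Arslanov
open Nat.Partrec (Code)
open Nat.Partrec.Code

theorem mem_pair_iff {f g : ℕ →. ℕ} {n y : ℕ} :
    y ∈ (Nat.pair <$> f n <*> g n) ↔ ∃ a ∈ f n, ∃ b ∈ g n, y = Nat.pair a b := by
  simp [Seq.seq, eq_comm]

theorem key {A : Set ℕ} {c₀ : Code} (hA : ∀ n, n ∈ A ↔ ∃ s, Astage c₀ s n = true)
    {h : ℕ →. ℕ} (hh : OracleRecursiveIn (charFn A) h) :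
    ∃ H : ℕ → ℕ → Option ℕ, Primrec₂ H ∧
      ∃ M : ℕ →. ℕ, OracleRecursiveIn (charFn A) M ∧
        ∀ n y, y ∈ h n → ∃ m, m ∈ M n ∧ ∀ s, m ≤ s → H s n = some y := by
  classical
  induction hh with
  | oracle =>
    refine ⟨fun s n => some (cond (Astage c₀ s n) 1 0), ?_, ?_⟩
    · exact (Primrec.option_some.comp (Primrec.cond ((astage_prim c₀).comp Primrec.fst
        Primrec.snd) (Primrec.const 1) (Primrec.const 0))).to₂
    · set q : ℕ →. ℕ := fun k => (Nat.pair <$> Part.some k <*> charFn A k.unpair.1) >>=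
        fun t => Part.some (cond (Astage c₀ t.unpair.1.unpair.2 t.unpair.1.unpair.1) 0
          t.unpair.2) with hq
      have hqrec : OracleRecursiveIn (charFn A) q := by
        refine OracleRecursiveIn.comp (recIn_of_computable ?_)
          (OracleRecursiveIn.pair recIn_some_id
            (recIn_precomp OracleRecursiveIn.oracle ((Primrec.fst.comp Primrec.unpair).to_comp)))
        exact (Primrec.cond ((astage_prim c₀).comp
            ((Primrec.snd.comp Primrec.unpair).comp (Primrec.fst.comp Primrec.unpair))
            ((Primrec.fst.comp Primrec.unpair).comp (Primrec.fst.comp Primrec.unpair)))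
          (Primrec.const 0) (Primrec.snd.comp Primrec.unpair)).to_comp
      have qval : ∀ a s, q (Nat.pair a s) =
          Part.some (cond (Astage c₀ s a) 0 (if a ∈ A then 1 else 0)) := by
        intro a s
        simp [hq, Seq.seq, charFn, Nat.unpair_pair]
      refine ⟨fun a => Nat.rfind fun n => (fun m => m = 0) <$> q (Nat.pair a n),
        OracleRecursiveIn.rfind hqrec, ?_⟩
      intro n y hy
      rw [charFn] at hy
      simp only [Part.mem_some_iff] at hy
      subst hy
      by_cases hn : n ∈ A
      · obtain ⟨s₀, hs₀⟩ := (hA n).1 hn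
        have pdom : (Nat.rfind fun s => (fun m => m = 0) <$> q (Nat.pair n s)).Dom := by
          refine Nat.rfind_dom.2 ⟨s₀, ?_, fun {m} _ => ?_⟩
          · simp [qval, hs₀, hn]
          · rw [qval]
            simp
        set m := (Nat.rfind fun s => (fun m => m = 0) <$> q (Nat.pair n s)).get pdom with hm
        have hmem := Part.get_mem pdom
        have hspec := Nat.rfind_spec hmem
        have hAst : Astage c₀ m n = true := by
          rw [← hm] at hspec
          rw [qval] at hspec
          simp only [Part.map_eq_map, Part.map_some, Part.mem_some_iff] at hspec
          by_contra hc
          simp only [Bool.not_eq_true] at hc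
          rw [hc] at hspec
          simp [hn] at hspec
        refine ⟨m, hmem, fun s hs => ?_⟩
        dsimp only
        rw [Astage_mono hs hAst]
        simp [hn]
      · have hAs : ∀ s, Astage c₀ s n = false := by
          intro s
          by_contra hc
          simp only [Bool.not_eq_false] at hc
          exact hn ((hA n).2 ⟨s, hc⟩)
        refine ⟨0, Nat.mem_rfind.2 ⟨?_, fun {m} hm => absurd hm (Nat.not_lt_zero m)⟩,
          fun s _ => ?_⟩
        · simp [qval, hAs, hn]
        · dsimp only
          rw [hAs s]
          simp [hn]
  | zero =>
    refine ⟨fun _ _ => some 0, (Primrec.const _).to₂, fun _ => Part.some 0,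
      recIn_of_computable (Primrec.const 0).to_comp, ?_⟩
    intro n y hy
    simp only [pure, PFun.pure, Part.mem_some_iff] at hy
    exact ⟨0, Part.mem_some 0, fun s _ => by rw [hy]⟩
  | succ =>
    refine ⟨fun _ n => some (n + 1), (Primrec.option_some.comp
      (Primrec.succ.comp Primrec.snd)).to₂, fun _ => Part.some 0,
      recIn_of_computable (Primrec.const 0).to_comp, ?_⟩
    intro n y hy
    simp only [PFun.coe_val, Part.mem_some_iff] at hy
    exact ⟨0, Part.mem_some 0, fun s _ => by rw [hy]⟩
  | left =>
    refine ⟨fun _ n => some n.unpair.1, (Primrec.option_some.comp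
      ((Primrec.fst.comp Primrec.unpair).comp Primrec.snd)).to₂, fun _ => Part.some 0,
      recIn_of_computable (Primrec.const 0).to_comp, ?_⟩
    intro n y hy
    simp only [PFun.coe_val, Part.mem_some_iff] at hy
    exact ⟨0, Part.mem_some 0, fun s _ => by rw [hy]⟩
  | right =>
    refine ⟨fun _ n => some n.unpair.2, (Primrec.option_some.comp
      ((Primrec.snd.comp Primrec.unpair).comp Primrec.snd)).to₂, fun _ => Part.some 0,
      recIn_of_computable (Primrec.const 0).to_comp, ?_⟩
    intro n y hy
    simp only [PFun.coe_val, Part.mem_some_iff] at hy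
    exact ⟨0, Part.mem_some 0, fun s _ => by rw [hy]⟩
  | @pair f g hf hg ihf ihg =>
    obtain ⟨Hf, HPf, Mf, hMf, modf⟩ := ihf
    obtain ⟨Hg, HPg, Mg, hMg, modg⟩ := ihg
    refine ⟨fun s n => (Hf s n).bind fun a => (Hg s n).map fun b => Nat.pair a b, ?_, ?_⟩
    · have : Primrec fun p : ℕ × ℕ => (Hf p.1 p.2).bind fun a =>
          (Hg p.1 p.2).map fun b => Nat.pair a b := by
        refine Primrec.option_bind (HPf.comp Primrec.fst Primrec.snd) ?_
        refine (Primrec.option_map ((HPg.comp Primrec.fst Primrec.snd).comp Primrec.fst)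
          ((Primrec₂.natPair.comp (Primrec.snd.comp Primrec.fst) Primrec.snd).to₂)).to₂
      exact this.to₂
    · refine ⟨fun n => (Nat.pair <$> Mf n <*> Mg n) >>= fun t =>
        Part.some (max t.unpair.1 t.unpair.2), ?_, ?_⟩
      · exact OracleRecursiveIn.comp (recIn_of_computable (Primrec.nat_max.comp
          (Primrec.fst.comp Primrec.unpair) (Primrec.snd.comp Primrec.unpair)).to_comp)
          (OracleRecursiveIn.pair hMf hMg)
      · intro n y hy
        obtain ⟨a, ha, b, hb, rfl⟩ := mem_pair_iff.1 hy
        obtain ⟨mf, hmf, ef⟩ := modf n a ha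
        obtain ⟨mg, hmg, eg⟩ := modg n b hb
        refine ⟨max mf mg, ?_, fun s hs => ?_⟩
        · refine Part.mem_bind_iff.2 ⟨Nat.pair mf mg, mem_pair_iff.2 ⟨mf, hmf, mg, hmg, rfl⟩, ?_⟩
          simp [Nat.unpair_pair]
        · dsimp only
          rw [ef s (le_trans (le_max_left _ _) hs), eg s (le_trans (le_max_right _ _) hs)]
          rfl
  | @comp f g hf hg ihf ihg =>
    obtain ⟨Hf, HPf, Mf, hMf, modf⟩ := ihf
    obtain ⟨Hg, HPg, Mg, hMg, modg⟩ := ihg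
    refine ⟨fun s n => (Hg s n).bind (Hf s), ?_, ?_⟩
    · have : Primrec fun p : ℕ × ℕ => (Hg p.1 p.2).bind (Hf p.1) :=
        Primrec.option_bind (HPg.comp Primrec.fst Primrec.snd)
          ((HPf.comp (Primrec.fst.comp Primrec.fst) Primrec.snd).to₂)
      exact this.to₂
    · refine ⟨fun n => (Nat.pair <$> Mg n <*> (g n >>= Mf)) >>= fun t =>
        Part.some (max t.unpair.1 t.unpair.2), ?_, ?_⟩
      · exact OracleRecursiveIn.comp (recIn_of_computable (Primrec.nat_max.comp
          (Primrec.fst.comp Primrec.unpair) (Primrec.snd.comp Primrec.unpair)).to_comp)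
          (OracleRecursiveIn.pair hMg (OracleRecursiveIn.comp hMf hg))
      · intro n y hy
        obtain ⟨z, hz, hyz⟩ := Part.mem_bind_iff.1 hy
        obtain ⟨mg, hmg, eg⟩ := modg n z hz
        obtain ⟨mf, hmf, ef⟩ := modf z y hyz
        have hmem2 : mf ∈ g n >>= Mf := Part.mem_bind_iff.2 ⟨z, hz, hmf⟩
        refine ⟨max mg mf, ?_, fun s hs => ?_⟩
        · refine Part.mem_bind_iff.2 ⟨Nat.pair mg mf,
            (mem_pair_iff (g := fun n => g n >>= Mf)).2 ⟨mg, hmg, mf, hmem2, rfl⟩, ?_⟩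
          simp [Nat.unpair_pair]
        · dsimp only
          rw [eg s (le_trans (le_max_left _ _) hs)]
          exact ef s (le_trans (le_max_right _ _) hs)
  | @prec f g hf hg ihf ihg =>
    obtain ⟨Hf, HPf, Mf, hMf, modf⟩ := ihf
    obtain ⟨Hg, HPg, Mg, hMg, modg⟩ := ihg
    refine ⟨precApprox Hf Hg, precApprox_prim HPf HPg, ?_⟩
    -- the computable-from-A function computing (value, modulus) pairs
    set u : ℕ → ℕ := fun q => Nat.pair q.unpair.1
      (Nat.pair q.unpair.2.unpair.1 q.unpair.2.unpair.2.unpair.1) with hu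
    have hucomp : Computable u :=
      (Primrec₂.natPair.comp (Primrec.fst.comp Primrec.unpair)
        (Primrec₂.natPair.comp
          ((Primrec.fst.comp Primrec.unpair).comp (Primrec.snd.comp Primrec.unpair))
          ((Primrec.fst.comp Primrec.unpair).comp
            ((Primrec.snd.comp Primrec.unpair).comp
              (Primrec.snd.comp Primrec.unpair))))).to_comp
    set post : ℕ → ℕ := fun t => Nat.pair t.unpair.2.unpair.1
      (max t.unpair.1.unpair.2.unpair.2.unpair.2 t.unpair.2.unpair.2) with hpost
    have hpostcomp : Computable post := by
      have u1 : Primrec fun t : ℕ => t.unpair.2.unpair.1 :=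
        (Primrec.fst.comp Primrec.unpair).comp (Primrec.snd.comp Primrec.unpair)
      have u2 : Primrec fun t : ℕ => t.unpair.1.unpair.2.unpair.2.unpair.2 :=
        (Primrec.snd.comp Primrec.unpair).comp ((Primrec.snd.comp Primrec.unpair).comp
          ((Primrec.snd.comp Primrec.unpair).comp (Primrec.fst.comp Primrec.unpair)))
      have u3 : Primrec fun t : ℕ => t.unpair.2.unpair.2 :=
        (Primrec.snd.comp Primrec.unpair).comp (Primrec.snd.comp Primrec.unpair)
      exact (Primrec₂.natPair.comp u1 (Primrec.nat_max.comp u2 u3)).to_comp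
    set f' : ℕ →. ℕ := fun a => Nat.pair <$> f a <*> Mf a with hf'
    set g' : ℕ →. ℕ := fun q => (Nat.pair <$> Part.some q <*>
      (Nat.pair <$> g (u q) <*> Mg (u q))) >>= fun t => Part.some (post t) with hg'
    have hf'rec : OracleRecursiveIn (charFn A) f' := OracleRecursiveIn.pair hf hMf
    have hg'rec : OracleRecursiveIn (charFn A) g' := by
      refine OracleRecursiveIn.comp (recIn_of_computable hpostcomp)
        (OracleRecursiveIn.pair recIn_some_id
          (OracleRecursiveIn.pair (recIn_precomp hg hucomp) (recIn_precomp hMg hucomp)))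
    have hKK := OracleRecursiveIn.prec hf'rec hg'rec
    refine ⟨fun p => (Nat.unpaired (fun a n =>
        n.rec (f' a) fun y IH => IH >>= fun i => g' (Nat.pair a (Nat.pair y i))) p) >>=
        fun r => Part.some r.unpair.2,
      OracleRecursiveIn.comp (recIn_of_computable
        (Primrec.snd.comp Primrec.unpair).to_comp) hKK, ?_⟩
    intro p y hy
    -- main claim by induction on n
    have claim : ∀ a n y, y ∈ (n.rec (f a)
          (fun y IH => IH >>= fun i => g (Nat.pair a (Nat.pair y i))) : Part ℕ) →
        ∃ m, Nat.pair y m ∈ (n.rec (f' a)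
            (fun y IH => IH >>= fun i => g' (Nat.pair a (Nat.pair y i))) : Part ℕ) ∧
          ∀ s, m ≤ s → (Nat.rec (Hf s a)
            (fun y IH => IH.bind fun i => Hg s (Nat.pair a (Nat.pair y i))) n : Option ℕ)
              = some y := by
      intro a n
      induction n with
      | zero =>
        intro y hy
        obtain ⟨m, hm, em⟩ := modf a y hy
        exact ⟨m, mem_pair_iff.2 ⟨y, hy, m, hm, rfl⟩, fun s hs => em s hs⟩
      | succ n ihn =>
        intro y hy
        obtain ⟨i, hi, hyg⟩ := Part.mem_bind_iff.1 hy
        obtain ⟨m, hm, em⟩ := ihn i hi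
        obtain ⟨mg, hmg, emg⟩ := modg (Nat.pair a (Nat.pair n i)) y hyg
        refine ⟨max m mg, ?_, fun s hs => ?_⟩
        · refine Part.mem_bind_iff.2 ⟨Nat.pair i m, hm, ?_⟩
          rw [hg']
          have huq : u (Nat.pair a (Nat.pair n (Nat.pair i m))) = Nat.pair a (Nat.pair n i) := by
            simp [hu, Nat.unpair_pair]
          refine Part.mem_bind_iff.2 ⟨Nat.pair (Nat.pair a (Nat.pair n (Nat.pair i m)))
            (Nat.pair y mg), ?_, ?_⟩
          · refine (mem_pair_iff (f := fun q => Part.some q)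
              (g := fun q => Nat.pair <$> g (u q) <*> Mg (u q))).2
              ⟨_, Part.mem_some _, Nat.pair y mg, ?_, rfl⟩
            rw [huq]
            exact mem_pair_iff.2 ⟨y, hyg, mg, hmg, rfl⟩
          · simp [hpost, Nat.unpair_pair]
        · have e1 : (Nat.rec (Hf s a)
              (fun y IH => IH.bind fun i => Hg s (Nat.pair a (Nat.pair y i))) n : Option ℕ)
                = some i := em s (le_trans (le_max_left _ _) hs)
          show (Nat.rec (Hf s a) _ n : Option ℕ).bind _ = some y
          rw [e1]
          exact emg s (le_trans (le_max_right _ _) hs)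
    have hy' : y ∈ (p.unpair.2.rec (f p.unpair.1)
        (fun y IH => IH >>= fun i => g (Nat.pair p.unpair.1 (Nat.pair y i))) : Part ℕ) := hy
    obtain ⟨m, hm, em⟩ := claim p.unpair.1 p.unpair.2 y hy'
    refine ⟨m, ?_, fun s hs => ?_⟩
    · exact Part.mem_bind_iff.2 ⟨Nat.pair y m, hm, by simp [Nat.unpair_pair]⟩
    · exact em s hs

  | @rfind f hf ihf =>
    obtain ⟨Hf, HPf, Mf, hMf, modf⟩ := ihf
    refine ⟨rfindApprox Hf, rfindApprox_prim HPf, ?_⟩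
    set hR : ℕ →. ℕ := fun a => Nat.rfind fun n => (fun m => m = 0) <$> f (Nat.pair a n) with hhR
    have hRrec : OracleRecursiveIn (charFn A) hR := OracleRecursiveIn.rfind hf
    -- running maximum of moduli of f on (a, 0), ..., (a, y), via prec
    set g' : ℕ →. ℕ := fun q => (Nat.pair <$> Part.some q <*>
        Mf (Nat.pair q.unpair.1 (q.unpair.2.unpair.1 + 1))) >>= fun t =>
        Part.some (max t.unpair.1.unpair.2.unpair.2 t.unpair.2) with hg'
    have hg'rec : OracleRecursiveIn (charFn A) g' := by
      have hw : Computable fun q : ℕ => Nat.pair q.unpair.1 (q.unpair.2.unpair.1 + 1) :=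
        (Primrec₂.natPair.comp (Primrec.fst.comp Primrec.unpair)
          (Primrec.succ.comp ((Primrec.fst.comp Primrec.unpair).comp
            (Primrec.snd.comp Primrec.unpair)))).to_comp
      have hpost : Computable fun t : ℕ => max t.unpair.1.unpair.2.unpair.2 t.unpair.2 :=
        (Primrec.nat_max.comp
          ((Primrec.snd.comp Primrec.unpair).comp ((Primrec.snd.comp Primrec.unpair).comp
            (Primrec.fst.comp Primrec.unpair)))
          (Primrec.snd.comp Primrec.unpair)).to_comp
      exact OracleRecursiveIn.comp (recIn_of_computable hpost)
        (OracleRecursiveIn.pair recIn_some_id (recIn_precomp hMf hw))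
    set f' : ℕ →. ℕ := fun a => Mf (Nat.pair a 0) with hf'
    have hf'rec : OracleRecursiveIn (charFn A) f' :=
      recIn_precomp hMf (Primrec₂.natPair.comp Primrec.id (Primrec.const 0)).to_comp
    set G : ℕ →. ℕ := Nat.unpaired (fun a n =>
        n.rec (f' a) fun y IH => IH >>= fun i => g' (Nat.pair a (Nat.pair y i))) with hG
    have hGrec : OracleRecursiveIn (charFn A) G := OracleRecursiveIn.prec hf'rec hg'rec
    -- the modulus function
    refine ⟨fun a => (Nat.pair <$> Part.some a <*> hR a) >>= fun p =>
        (Nat.pair <$> Part.some p.unpair.2 <*> G p) >>= fun t =>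
        Part.some (max t.unpair.1 t.unpair.2), ?_, ?_⟩
    · have inner : OracleRecursiveIn (charFn A) (fun p => (Nat.pair <$> Part.some p.unpair.2 <*> G p)
          >>= fun t => Part.some (max t.unpair.1 t.unpair.2)) := by
        refine OracleRecursiveIn.comp (recIn_of_computable (Primrec.nat_max.comp
            (Primrec.fst.comp Primrec.unpair) (Primrec.snd.comp Primrec.unpair)).to_comp) ?_
        exact OracleRecursiveIn.pair
          (recIn_of_computable (Primrec.snd.comp Primrec.unpair).to_comp) hGrec
      exact OracleRecursiveIn.comp inner (OracleRecursiveIn.pair recIn_some_id hRrec)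
    intro a y hy
    have hy0 := Nat.rfind_spec hy
    have hylt := fun {n : ℕ} (hn : n < y) => Nat.rfind_min hy hn
    -- the value at y is 0
    have hv0 : (0 : ℕ) ∈ f (Nat.pair a y) := by
      obtain ⟨v, hv, hv2⟩ := (Part.mem_map_iff _).1 hy0
      have : v = 0 := by simpa using hv2
      rwa [this] at hv
    -- values below y are nonzero
    have hvlt : ∀ n, n < y → ∃ v, v ∈ f (Nat.pair a n) ∧ v ≠ 0 := by
      intro n hn
      obtain ⟨v, hv, hv2⟩ := (Part.mem_map_iff _).1 (hylt hn)
      refine ⟨v, hv, ?_⟩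
      simpa using hv2
    have hdom : ∀ n, n ≤ y → (f (Nat.pair a n)).Dom := by
      intro n hn
      rcases lt_or_eq_of_le hn with hn' | rfl
      · obtain ⟨v, hv, _⟩ := hvlt n hn'
        exact Part.dom_iff_mem.2 ⟨v, hv⟩
      · exact Part.dom_iff_mem.2 ⟨0, hv0⟩
    -- claim: the running-max G dominates all moduli up to y
    have claim : ∀ yy, (∀ n, n ≤ yy → (f (Nat.pair a n)).Dom) →
        ∃ mm, mm ∈ (yy.rec (f' a)
            (fun y' IH => IH >>= fun i => g' (Nat.pair a (Nat.pair y' i))) : Part ℕ) ∧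
          ∀ n, n ≤ yy → ∀ v, v ∈ f (Nat.pair a n) → ∀ s, mm ≤ s →
            Hf s (Nat.pair a n) = some v := by
      intro yy
      induction yy with
      | zero =>
        intro hd
        have h0 := Part.get_mem (hd 0 le_rfl)
        obtain ⟨m, hm, em⟩ := modf (Nat.pair a 0) _ h0
        refine ⟨m, hm, fun n hn v hv s hs => ?_⟩
        interval_cases n
        rw [Part.mem_unique hv h0]
        exact em s hs
      | succ yy ihy =>
        intro hd
        obtain ⟨mm, hmm, emm⟩ := ihy fun n hn => hd n (hn.trans (Nat.le_succ yy))
        have hnew := Part.get_mem (hd (yy+1) le_rfl)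
        obtain ⟨m', hm', em'⟩ := modf (Nat.pair a (yy+1)) _ hnew
        refine ⟨max mm m', ?_, ?_⟩
        · refine Part.mem_bind_iff.2 ⟨mm, hmm, ?_⟩
          rw [hg']
          refine Part.mem_bind_iff.2 ⟨Nat.pair (Nat.pair a (Nat.pair yy mm)) m', ?_, ?_⟩
          · refine (mem_pair_iff (f := fun q => Part.some q)
              (g := fun q => Mf (Nat.pair q.unpair.1 (q.unpair.2.unpair.1 + 1)))).2
              ⟨_, Part.mem_some _, m', ?_, rfl⟩
            simp only [Nat.unpair_pair]
            exact hm'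
          · simp [Nat.unpair_pair]
        · intro n hn v hv s hs
          rcases Nat.lt_succ_iff_lt_or_eq.1 (Nat.lt_succ_of_le hn) with hn' | rfl
          · exact emm n (Nat.lt_succ_iff.1 hn') v hv s (le_trans (le_max_left _ _) hs)
          · rw [Part.mem_unique hv hnew]
            exact em' s (le_trans (le_max_right _ _) hs)
    obtain ⟨mm, hmm, emm⟩ := claim y hdom
    refine ⟨max y mm, ?_, fun s hs => ?_⟩
    · refine Part.mem_bind_iff.2 ⟨Nat.pair a y, ?_, ?_⟩
      · exact (mem_pair_iff (f := fun q => Part.some q) (g := hR)).2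
          ⟨a, Part.mem_some a, y, hy, rfl⟩
      · refine Part.mem_bind_iff.2 ⟨Nat.pair y mm, ?_, ?_⟩
        · refine (mem_pair_iff (f := fun p => Part.some p.unpair.2) (g := G)).2
            ⟨y, by simp [Nat.unpair_pair], mm, ?_, by simp [Nat.unpair_pair]⟩
          show mm ∈ G (Nat.pair a y)
          rw [hG]
          simpa [Nat.unpaired, Nat.unpair_pair] using hmm
        · simp [Nat.unpair_pair]
    · refine rfindApprox_eq (le_trans (le_max_left _ _) hs) ?_ ?_
      · exact emm y le_rfl 0 hv0 s (le_trans (le_max_right _ _) hs)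
      · intro n hn
        obtain ⟨v, hv, hvne⟩ := hvlt n hn
        obtain ⟨w, rfl⟩ := Nat.exists_eq_succ_of_ne_zero hvne
        exact ⟨w, emm n (le_of_lt hn) (w+1) hv s (le_trans (le_max_right _ _) hs)⟩


end Arslanov
namespace Arslanov
open Nat.Partrec (Code)
open Nat.Partrec.Code

theorem kk_prim : Primrec₂ fun s x : ℕ => Astage (Denumerable.ofNat Code x) s x :=
  (Primrec.option_isSome.comp (primrec_evaln.comp
    ((Primrec.fst.pair ((Primrec.ofNat Code).comp Primrec.snd)).pair Primrec.snd))).to₂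

theorem kk_sound {s x : ℕ} (h : Astage (Denumerable.ofNat Code x) s x = true) : x ∈ Khalt :=
  Astage_sound h

theorem kk_complete {x : ℕ} (h : x ∈ Khalt) :
    ∃ s, Astage (Denumerable.ofNat Code x) s x = true := by
  obtain ⟨v, hv⟩ := Part.dom_iff_mem.1 h
  obtain ⟨k, hk⟩ := evaln_complete.1 hv
  exact ⟨k, Option.isSome_iff_exists.2 ⟨v, hk⟩⟩

end Arslanov

open Nat.Partrec (Code)
open Nat.Partrec.Code
open Arslanov

/-- Arslanov's completeness criterion. -/
theorem arslanov_completeness_criterion (A : Set ℕ) (hce : ∃ e : ℕ, W e = A)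
    (hred : TuringRed A Khalt) (hinc : ¬ TuringRed Khalt A)
    (f : ℕ → ℕ) (hf : FunRecIn A f) :
    ∃ e : ℕ, W (f e) = W e := by
  classical
  obtain ⟨e₀, hW⟩ := hce
  set c₀ : Code := Denumerable.ofNat Code e₀ with hc₀
  have hA : ∀ n, n ∈ A ↔ ∃ s, Astage c₀ s n = true := by
    intro n
    rw [← hW]
    constructor
    · intro hn
      obtain ⟨v, hv⟩ := Part.dom_iff_mem.1 hn
      obtain ⟨k, hk⟩ := evaln_complete.1 hv
      exact ⟨k, Option.isSome_iff_exists.2 ⟨v, hk⟩⟩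
    · rintro ⟨s, hs⟩
      exact Astage_sound hs
  obtain ⟨H, HP, M, hMrec, hmod⟩ := key hA hf
  have modf : ∀ n, ∃ m, m ∈ M n ∧ ∀ s, m ≤ s → H s n = some (f n) :=
    fun n => hmod n (f n) (Part.mem_some _)
  -- the Kleene fixed point construction
  set kk : ℕ → ℕ → Bool := fun s x => Astage (Denumerable.ofNat Code x) s x with hkk
  set F : Code → ℕ →. ℕ := fun c n =>
    (Nat.rfind fun s => Part.some (kk s n.unpair.1)) >>= fun s =>
      eval (Denumerable.ofNat Code
        ((H s (Encodable.encode (curry c n.unpair.1))).getD 0)) n.unpair.2 with hF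
  have hFpart : Partrec₂ F := by
    have hkkc : Computable fun q : (Code × ℕ) × ℕ => kk q.2 q.1.2.unpair.1 :=
      (kk_prim.comp Primrec.snd
        (((Primrec.fst.comp Primrec.unpair).comp (Primrec.snd.comp Primrec.fst)))).to_comp
    have hrf : Partrec fun p : Code × ℕ =>
        Nat.rfind fun s => (Part.some (kk s p.2.unpair.1) : Part Bool) :=
      Partrec.rfind (hkkc : _)
    have harg : Computable fun q : (Code × ℕ) × ℕ =>
        Denumerable.ofNat Code ((H q.2 (Encodable.encode (curry q.1.1 q.1.2.unpair.1))).getD 0) :=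
      ((Primrec.ofNat Code).comp ((Primrec.option_getD.comp
        (HP.comp Primrec.snd (Primrec.encode.comp (primrec₂_curry.comp
          (Primrec.fst.comp Primrec.fst)
          ((Primrec.fst.comp Primrec.unpair).comp (Primrec.snd.comp Primrec.fst)))))
        (Primrec.const 0)))).to_comp
    have hm : Computable fun q : (Code × ℕ) × ℕ => q.1.2.unpair.2 :=
      ((Primrec.snd.comp Primrec.unpair).comp (Primrec.snd.comp Primrec.fst)).to_comp
    exact hrf.bind ((eval_part.comp harg hm) : _)
  obtain ⟨c, hc⟩ := fixed_point₂ hFpart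
  set hidx : ℕ → ℕ := fun x => Encodable.encode (curry c x) with hhidx
  have hidxc : Computable hidx :=
    (Primrec.encode.comp (primrec₂_curry.comp (Primrec.const c) Primrec.id)).to_comp
  have heval : ∀ x m, phi (hidx x) m =
      (Nat.rfind fun s => Part.some (kk s x)) >>= fun s =>
        eval (Denumerable.ofNat Code ((H s (hidx x)).getD 0)) m := by
    intro x m
    have h1 : phi (hidx x) m = eval (curry c x) m := by
      rw [phi, hhidx]
      simp [Denumerable.ofNat_encode]
    rw [h1, eval_curry, hc]
    rw [hF]
    simp [Nat.unpair_pair]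
    rfl
  by_contra hno
  push_neg at hno
  -- the reduction of Khalt to A
  set R : ℕ →. ℕ := fun x => (Nat.pair <$> Part.some x <*> M (hidx x)) >>= fun t =>
    Part.some (cond (kk t.unpair.2 t.unpair.1) 1 0) with hR
  have hRrec : OracleRecursiveIn (charFn A) R := by
    refine OracleRecursiveIn.comp (recIn_of_computable ?_)
      (OracleRecursiveIn.pair recIn_some_id (recIn_precomp hMrec hidxc))
    exact (Primrec.cond (kk_prim.comp (Primrec.snd.comp Primrec.unpair)
        (Primrec.fst.comp Primrec.unpair))
      (Primrec.const 1) (Primrec.const 0)).to_comp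
  have hReq : ∀ x, R x = charFn Khalt x := by
    intro x
    obtain ⟨m, hm, em⟩ := modf (hidx x)
    have hMx : M (hidx x) = Part.some m := Part.eq_some_iff.2 hm
    have hRx : R x = Part.some (cond (kk m x) 1 0) := by
      rw [hR]
      simp only [hMx, Seq.seq, Part.map_eq_map, Part.map_some, Part.bind_some,
        Part.bind_eq_bind]
      simp [Nat.unpair_pair]
    have hiff : kk m x = true ↔ x ∈ Khalt := by
      constructor
      · exact fun h => kk_sound h
      · intro hx
        by_contra hkm
        simp only [Bool.not_eq_true] at hkm
        obtain ⟨s₀, hs₀⟩ := kk_complete hx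
        have hs₀' : kk s₀ x = true := hs₀
        have pdom : (Nat.rfind fun s => (Part.some (kk s x) : Part Bool)).Dom :=
          Nat.rfind_dom.2 ⟨s₀, by simp [hs₀'], fun {m'} _ => trivial⟩
        obtain ⟨sx, hsxmem⟩ := Part.dom_iff_mem.1 pdom
        have hsxtrue : kk sx x = true := by
          have := Nat.rfind_spec hsxmem
          simpa using this
        have hmsx : m ≤ sx := by
          by_contra hlt
          push_neg at hlt
          have h2 : kk m x = true := Astage_mono (le_of_lt hlt) hsxtrue
          rw [h2] at hkm
          exact Bool.noConfusion hkm
        have hHval : H sx (hidx x) = some (f (hidx x)) := em sx hmsx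
        have hrf : (Nat.rfind fun s => (Part.some (kk s x) : Part Bool)) = Part.some sx :=
          Part.eq_some_iff.2 hsxmem
        have hphieq : ∀ mm, phi (hidx x) mm = phi (f (hidx x)) mm := by
          intro mm
          rw [heval x mm, hrf]
          simp only [Part.bind_eq_bind, Part.bind_some]
          rw [hHval]
          rfl
        exact hno (hidx x) (Set.ext fun mm => by
          show (phi (f (hidx x)) mm).Dom ↔ (phi (hidx x) mm).Dom
          rw [hphieq mm])
    rw [hRx, charFn]
    by_cases hx : x ∈ Khalt
    · rw [if_pos hx, hiff.2 hx]
      rfl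
    · rw [if_neg hx]
      have : kk m x = false := by
        by_contra hc'
        simp only [Bool.not_eq_false] at hc'
        exact hx (hiff.1 hc')
      rw [this]
      rfl
  exact hinc (recIn_congr hRrec hReq)
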